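/- Let H be a graph with at least one edge, let G be a d-degenerate graph for some d > 0, and let 𝓗 be a set of edge-disjoint copies of H in G with |𝓗| ≥ α·|V(G)|. Then there exists 𝓗' ⊆ 𝓗 with |𝓗'| ≥ α·|V(G)|/2 such that the subgraph G[𝓗'] of G induced by the union of the copies in 𝓗' is (α/4d)-degree preserving: it has at least (α/4d)·|V(G)| vertices and every vertex v of G[𝓗'] satisfies deg_{G[𝓗']}(v) ≥ (α/4d)·deg_G(v). -/

import Mathlib

open SimpleGraph

variable {α β : Type*}

/-- A copy of `H` in `G`: an injective map sending edges to edges. -/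
def IsCopy (H : SimpleGraph α) (G : SimpleGraph β) (f : α → β) : Prop :=
  Function.Injective f ∧ ∀ a b, H.Adj a b → G.Adj (f a) (f b)

/-- The edge set of the image of a copy. -/
def copyEdges (H : SimpleGraph α) (f : α → β) : Set (Sym2 β) :=
  Sym2.map f '' H.edgeSet

/-- The subgraph `G[𝓗]` of `G` induced by the union of the edge images of the copies
in `𝓗` (as a graph on the same vertex type; its vertices are its support). -/
noncomputable def unionGraph (H : SimpleGraph α) (𝓗 : Finset (α → β)) : SimpleGraph β :=
  SimpleGraph.fromEdgeSet (⋃ f ∈ 𝓗, copyEdges H f)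

/-- `G` is `d`-degenerate: every nonempty (induced) subgraph has a vertex of degree at
most `d`. -/
def DegenerateLE [Fintype β] (G : SimpleGraph β) (d : ℕ) : Prop :=
  ∀ s : Finset β, s.Nonempty → ∃ v ∈ s, ({w ∈ (s : Set β) | G.Adj v w}.ncard ≤ d)

/-- `G'` is a `c`-degree-preserving subgraph of `G`: it has at least `c·|V(G)|` vertices
and every one of its vertices keeps at least a `c`-fraction of its `G`-degree. -/
def DegreePreserving [Fintype β] (G G' : SimpleGraph β) (c : ℝ) : Prop :=
  (G'.support.ncard : ℝ) ≥ c * Fintype.card β ∧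
  ∀ v ∈ G'.support, ((G'.neighborSet v).ncard : ℝ) ≥ c * (G.neighborSet v).ncard

/-- edges of a copy are non-diagonal and are G-edges -/
lemma copyEdges_adj {H : SimpleGraph α} {G : SimpleGraph β} {f : α → β}
    (hf : IsCopy H G f) {x y : β} (h : s(x, y) ∈ copyEdges H f) : G.Adj x y := by
  obtain ⟨e, he, hmap⟩ := h
  induction e with
  | _ a b =>
    rw [SimpleGraph.mem_edgeSet] at he
    rw [Sym2.map_pair_eq, Sym2.eq_iff] at hmap
    rcases hmap with ⟨ha, hb⟩ | ⟨ha, hb⟩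
    · rw [← ha, ← hb]; exact hf.2 a b he
    · rw [← ha, ← hb]; exact (hf.2 a b he).symm

lemma copyEdges_not_isDiag {H : SimpleGraph α} {G : SimpleGraph β} {f : α → β}
    (hf : IsCopy H G f) {e : Sym2 β} (h : e ∈ copyEdges H f) : ¬ e.IsDiag := by
  induction e with
  | _ x y =>
    intro hd
    rw [Sym2.isDiag_iff_proj_eq] at hd
    exact (copyEdges_adj hf h).ne hd

lemma unionGraph_adj {H : SimpleGraph α} {S : Finset (α → β)} {x y : β} :
    (unionGraph H S).Adj x y ↔ (∃ f ∈ S, s(x, y) ∈ copyEdges H f) ∧ x ≠ y := by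
  simp [unionGraph, fromEdgeSet_adj]

lemma unionGraph_le {H : SimpleGraph α} {G : SimpleGraph β} {S : Finset (α → β)}
    (hcopies : ∀ f ∈ S, IsCopy H G f) : unionGraph H S ≤ G := by
  intro x y hxy
  rw [unionGraph_adj] at hxy
  obtain ⟨⟨f, hf, he⟩, _⟩ := hxy
  exact copyEdges_adj (hcopies f hf) he

lemma unionGraph_mono {H : SimpleGraph α} {S T : Finset (α → β)} (h : S ⊆ T) :
    unionGraph H S ≤ unionGraph H T := by
  intro x y hxy
  rw [unionGraph_adj] at hxy ⊢
  obtain ⟨⟨f, hf, he⟩, hne⟩ := hxy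
  exact ⟨⟨f, h hf, he⟩, hne⟩

lemma copyEdges_subset_edgeSet {H : SimpleGraph α} {G : SimpleGraph β} {S : Finset (α → β)}
    {f : α → β} (hf : f ∈ S) (hcopy : IsCopy H G f) :
    copyEdges H f ⊆ (unionGraph H S).edgeSet := by
  intro e he
  rw [unionGraph, edgeSet_fromEdgeSet]
  exact ⟨Set.mem_biUnion hf he, copyEdges_not_isDiag hcopy he⟩

/-- Degeneracy edge bound: any subgraph of G with support in s has at most d·|s| edges. -/
lemma edge_bound [Fintype β] (G : SimpleGraph β) (d : ℕ)
    (hdeg : ∀ s : Finset β, s.Nonempty → ∃ v ∈ s, ({w ∈ (s : Set β) | G.Adj v w}.ncard ≤ d))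
    (s : Finset β) :
    ∀ G' : SimpleGraph β, G' ≤ G → G'.support ⊆ ↑s → G'.edgeSet.ncard ≤ d * s.card := by
  classical
  induction s using Finset.strongInduction with
  | _ s ih =>
    intro G' hle hsup
    rcases s.eq_empty_or_nonempty with rfl | hne
    · have : G'.edgeSet = ∅ := by
        ext e
        induction e with
        | _ x y =>
          simp only [Set.mem_empty_iff_false, iff_false, SimpleGraph.mem_edgeSet]
          intro h
          exact absurd (hsup ⟨y, h⟩) (by simp)
      simp [this]
    · obtain ⟨v, hv, hvd⟩ := hdeg s hne
      set G'' := G'.deleteEdges (G'.incidenceSet v) with hG''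
      have hadj : ∀ x y, G''.Adj x y ↔ G'.Adj x y ∧ x ≠ v ∧ y ≠ v := by
        intro x y
        simp only [hG'', deleteEdges_adj, incidenceSet, Set.mem_setOf_eq, mem_edgeSet]
        constructor
        · rintro ⟨h, h2⟩
          refine ⟨h, ?_, ?_⟩ <;> rintro rfl <;> exact h2 ⟨h, by simp⟩
        · rintro ⟨h, hx, hy⟩
          refine ⟨h, ?_⟩
          rintro ⟨-, hmem⟩
          rw [Sym2.mem_iff] at hmem
          tauto
      have hle'' : G'' ≤ G := fun x y h => hle ((hadj x y).1 h).1
      have hsup'' : G''.support ⊆ ↑(s.erase v) := by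
        intro x hx
        obtain ⟨y, (hy : G''.Adj x y)⟩ := hx
        rw [hadj] at hy
        simp only [Finset.coe_erase, Set.mem_diff, Set.mem_singleton_iff]
        exact ⟨hsup ⟨y, hy.1⟩, hy.2.1⟩
      have hrec := ih (s.erase v) (Finset.erase_ssubset hv) G'' hle'' hsup''
      -- edge accounting
      have hesub : G'.incidenceSet v ⊆ G'.edgeSet := G'.incidenceSet_subset v
      have hediff : G''.edgeSet = G'.edgeSet \ G'.incidenceSet v :=
        SimpleGraph.edgeSet_deleteEdges _
      have hfin : G'.edgeSet.Finite := Set.toFinite _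
      have hcard : G'.edgeSet.ncard ≤ G''.edgeSet.ncard + (G'.incidenceSet v).ncard := by
        have h3 := Set.ncard_le_ncard hesub hfin
        rw [hediff, Set.ncard_diff hesub]
        omega
      have hinc : (G'.incidenceSet v).ncard ≤ d := by
        have h1 : (G'.incidenceSet v).ncard = (G'.neighborSet v).ncard := by
          rw [Set.ncard_eq_toFinset_card', Set.ncard_eq_toFinset_card',
            Set.toFinset_card, Set.toFinset_card]
          exact Fintype.card_congr (G'.incidenceSetEquivNeighborSet v)
        have h2 : G'.neighborSet v ⊆ {w ∈ (s : Set β) | G.Adj v w} := by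
          intro w hw
          exact ⟨hsup ⟨v, (G'.adj_symm hw)⟩, hle hw⟩
        calc (G'.incidenceSet v).ncard = (G'.neighborSet v).ncard := h1
          _ ≤ _ := Set.ncard_le_ncard h2 (Set.toFinite _)
          _ ≤ d := hvd
      have hsc : s.card = (s.erase v).card + 1 := by
        have := Finset.card_pos.mpr hne
        rw [Finset.card_erase_of_mem hv]
        omega
      calc G'.edgeSet.ncard ≤ G''.edgeSet.ncard + (G'.incidenceSet v).ncard := hcard
        _ ≤ d * (s.erase v).card + d := by omega
        _ = d * s.card := by rw [hsc]; ring

/-- Lemma B: number of copies is at most the number of edges of the union graph. -/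
lemma card_le_edges [Fintype β] {H : SimpleGraph α} {G : SimpleGraph β} {S : Finset (α → β)}
    (hcopies : ∀ f ∈ S, IsCopy H G f)
    (hdisj : ∀ f ∈ S, ∀ g ∈ S, f ≠ g → Disjoint (copyEdges H f) (copyEdges H g))
    (hHedge : H.edgeSet.Nonempty) :
    S.card ≤ (unionGraph H S).edgeSet.ncard := by
  classical
  have hne : ∀ f : α → β, (copyEdges H f).Nonempty := fun f =>
    hHedge.image (Sym2.map f)
  choose e he using fun f => hne f
  rw [Set.ncard_eq_toFinset_card']
  apply Finset.card_le_card_of_injOn e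
  · intro f hf
    rw [Finset.mem_coe, Set.mem_toFinset]
    exact copyEdges_subset_edgeSet hf (hcopies f hf) (he f)
  · intro f hf g hg hfg
    by_contra hne'
    exact Set.not_disjoint_iff.mpr ⟨e f, he f, hfg ▸ he g⟩
      (hdisj f hf g hg hne')

/-- Lemma C: copies touching a vertex v are at most its degree in the union graph. -/
lemma touching_le_degree [Fintype β] {H : SimpleGraph α} {G : SimpleGraph β}
    {S : Finset (α → β)}
    (hcopies : ∀ f ∈ S, IsCopy H G f)
    (hdisj : ∀ f ∈ S, ∀ g ∈ S, f ≠ g → Disjoint (copyEdges H f) (copyEdges H g))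
    (v : β) [DecidablePred fun f : α → β => ∃ e ∈ copyEdges H f, v ∈ e] :
    (S.filter (fun f => ∃ e ∈ copyEdges H f, v ∈ e)).card
      ≤ ((unionGraph H S).neighborSet v).ncard := by
  classical
  set R := S.filter (fun f => ∃ e ∈ copyEdges H f, v ∈ e) with hR
  have key : ∀ f ∈ R, ∃ x, s(v, x) ∈ copyEdges H f := by
    intro f hf
    rw [hR, Finset.mem_filter] at hf
    obtain ⟨hfS, e, he, hv⟩ := hf
    obtain ⟨x, rfl⟩ := Sym2.mem_iff_exists.mp hv
    exact ⟨x, he⟩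
  choose w hw using key
  rw [Set.ncard_eq_toFinset_card']
  apply Finset.card_le_card_of_injOn (fun f => if h : f ∈ R then w f h else v)
  · intro f hf
    simp only [Finset.mem_coe] at hf; simp only [hf, dif_pos, Finset.mem_coe, Set.mem_toFinset, mem_neighborSet]
    have hfS : f ∈ S := (Finset.mem_filter.mp (hR ▸ hf)).1
    rw [unionGraph_adj]
    refine ⟨⟨f, hfS, hw f hf⟩, ?_⟩
    intro hvw
    exact copyEdges_not_isDiag (hcopies f hfS) (hw f hf)
      (by rw [hvw]; exact Sym2.mk_isDiag_iff.mpr rfl)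
  · intro f hf g hg hfg
    simp only [Finset.mem_coe] at hf hg
    simp only [hf, hg, dif_pos] at hfg
    by_contra hne'
    have hfS : f ∈ S := (Finset.mem_filter.mp (hR ▸ hf)).1
    have hgS : g ∈ S := (Finset.mem_filter.mp (hR ▸ hg)).1
    exact Set.not_disjoint_iff.mpr ⟨s(v, w f hf), hw f hf, by rw [hfg]; exact hw g hg⟩
      (hdisj f hfS g hgS hne')

/-- After removing all copies touching `v`, `v` leaves the support. -/
lemma not_mem_support_sdiff [DecidableEq (α → β)] {H : SimpleGraph α} {S : Finset (α → β)} (v : β)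
    [DecidablePred fun f : α → β => ∃ e ∈ copyEdges H f, v ∈ e] :
    v ∉ (unionGraph H (S \ S.filter (fun f => ∃ e ∈ copyEdges H f, v ∈ e))).support := by
  intro hv
  obtain ⟨x, (hx : (unionGraph H _).Adj v x)⟩ := hv
  rw [unionGraph_adj] at hx
  obtain ⟨⟨f, hf, he⟩, -⟩ := hx
  rw [Finset.mem_sdiff] at hf
  exact hf.2 (Finset.mem_filter.mpr ⟨hf.1, s(v, x), he, Sym2.mem_mk_left _ _⟩)

/-- The deletion process: main induction. -/
lemma main_ind [Fintype β] [DecidableEq (α → β)] [DecidableEq β] (H : SimpleGraph α) (G : SimpleGraph β)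
    (c : ℝ) (hc : 0 ≤ c) (S : Finset (α → β))
    (hcopies : ∀ f ∈ S, IsCopy H G f)
    (hdisj : ∀ f ∈ S, ∀ g ∈ S, f ≠ g → Disjoint (copyEdges H f) (copyEdges H g))
    (W : Finset β) (hW : ∀ v ∈ W, v ∉ (unionGraph H S).support) :
    ∃ T ⊆ S, ∃ W' : Finset β, W ⊆ W' ∧
      ((S.card : ℝ) ≤ T.card + c * ∑ v ∈ W' \ W, ((G.neighborSet v).ncard : ℝ)) ∧
      (∀ v ∈ (unionGraph H T).support,
        (((unionGraph H T).neighborSet v).ncard : ℝ) ≥ c * ((G.neighborSet v).ncard : ℝ)) := by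
  classical
  induction S using Finset.strongInduction generalizing W with
  | _ S ih =>
    by_cases hbad : ∃ v ∈ (unionGraph H S).support,
        (((unionGraph H S).neighborSet v).ncard : ℝ) < c * ((G.neighborSet v).ncard : ℝ)
    · obtain ⟨v, hv, hvdeg⟩ := hbad
      set R := S.filter (fun f => ∃ e ∈ copyEdges H f, v ∈ e) with hRdef
      have hRsub : R ⊆ S := Finset.filter_subset _ _
      have hRne : R.Nonempty := by
        obtain ⟨x, (hx : (unionGraph H S).Adj v x)⟩ := hv
        rw [unionGraph_adj] at hx
        obtain ⟨⟨f, hf, he⟩, -⟩ := hx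
        exact ⟨f, Finset.mem_filter.mpr ⟨hf, s(v, x), he, Sym2.mem_mk_left _ _⟩⟩
      set S' := S \ R with hS'def
      have hS'sub : S' ⊆ S := Finset.sdiff_subset
      have hS'ss : S' ⊂ S := Finset.sdiff_ssubset hRsub hRne
      have hsupmono : (unionGraph H S').support ⊆ (unionGraph H S).support :=
        SimpleGraph.support_mono (unionGraph_mono hS'sub)
      have hW' : ∀ u ∈ insert v W, u ∉ (unionGraph H S').support := by
        intro u hu
        rcases Finset.mem_insert.mp hu with rfl | hu
        · exact not_mem_support_sdiff u
        · exact fun h => hW u hu (hsupmono h)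
      obtain ⟨T, hTsub, W', hWW', hcount, hgood⟩ :=
        ih S' hS'ss (fun f hf => hcopies f (hS'sub hf))
          (fun f hf g hg => hdisj f (hS'sub hf) g (hS'sub hg))
          (insert v W) hW'
      refine ⟨T, hTsub.trans hS'sub, W', (Finset.subset_insert v W).trans hWW', ?_, hgood⟩
      have hvW : v ∉ W := fun h => hW v h hv
      have hvW' : v ∈ W' := hWW' (Finset.mem_insert_self v W)
      have hsplit : W' \ W = insert v (W' \ insert v W) := by
        ext u
        simp only [Finset.mem_sdiff, Finset.mem_insert]
        constructor
        · rintro ⟨hu, hu2⟩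
          by_cases h : u = v
          · exact Or.inl h
          · exact Or.inr ⟨hu, fun h' => h'.elim h hu2⟩
        · rintro (rfl | ⟨hu, hu2⟩)
          · exact ⟨hvW', hvW⟩
          · exact ⟨hu, fun h => hu2 (Or.inr h)⟩
      have hvnot : v ∉ W' \ insert v W := by simp
      have hRcard : (R.card : ℝ) ≤ c * ((G.neighborSet v).ncard : ℝ) := by
        have h1 : (R.card : ℝ) ≤ (((unionGraph H S).neighborSet v).ncard : ℝ) :=
          Nat.cast_le.mpr (touching_le_degree hcopies hdisj v)
        linarith
      have hcardsplit : (S.card : ℝ) = S'.card + R.card := by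
        have := Finset.card_sdiff_add_card_eq_card hRsub
        rw [hS'def]
        push_cast [← this]
        ring
      rw [hsplit, Finset.sum_insert hvnot, mul_add]
      linarith
    · push_neg at hbad
      exact ⟨S, le_refl S, W, le_refl W, by simp, hbad⟩

/-- In a `d`-degenerate graph `G`, any set `𝓗` of at least `α·|V(G)|`
edge-disjoint copies of a graph `H` (with an edge) contains a subset `𝓗'` of at least
`α·|V(G)|/2` copies such that `G[𝓗']` is `(α/4d)`-degree preserving. -/
theorem stmt2 [Fintype α] [Fintype β] (H : SimpleGraph α) (G : SimpleGraph β)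
    (d : ℕ) (hd : 0 < d) (a : ℝ) (ha : 0 < a)
    (hHedge : H.edgeSet.Nonempty)
    (hdeg : DegenerateLE G d)
    (𝓗 : Finset (α → β))
    (hcopies : ∀ f ∈ 𝓗, IsCopy H G f)
    (hdisj : ∀ f ∈ 𝓗, ∀ g ∈ 𝓗, f ≠ g → Disjoint (copyEdges H f) (copyEdges H g))
    (hcard : (𝓗.card : ℝ) ≥ a * Fintype.card β) :
    ∃ 𝓗' ⊆ 𝓗, (𝓗'.card : ℝ) ≥ a * Fintype.card β / 2 ∧
      DegreePreserving G (unionGraph H 𝓗') (a / (4 * d)) := by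
  classical
  set n : ℝ := (Fintype.card β : ℝ) with hn
  have hn0 : 0 ≤ n := Nat.cast_nonneg _
  set c : ℝ := a / (4 * d) with hc
  have hD : (0:ℝ) < d := Nat.cast_pos.mpr hd
  have hc0 : 0 ≤ c := by positivity
  obtain ⟨T, hTsub, W', hWW', hcount, hgood⟩ :=
    main_ind H G c hc0 𝓗 hcopies hdisj ∅ (by simp)
  -- degree sum bound
  have hncd : ∀ v : β, (G.neighborSet v).ncard = G.degree v := by
    intro v
    rw [Set.ncard_eq_toFinset_card', Set.toFinset_card]
    exact G.card_neighborSet_eq_degree v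
  have hedges : G.edgeSet.ncard ≤ d * Fintype.card β := by
    simpa using edge_bound G d hdeg Finset.univ G le_rfl (by simp)
  have hedgefin : G.edgeFinset.card = G.edgeSet.ncard := by
    rw [Set.ncard_eq_toFinset_card']; congr 1
  have hsum : ∑ v ∈ W' \ ∅, ((G.neighborSet v).ncard : ℝ) ≤ 2 * (d * n) := by
    have h1 : ∑ v ∈ W' \ ∅, ((G.neighborSet v).ncard : ℝ)
        ≤ ∑ v ∈ Finset.univ, ((G.neighborSet v).ncard : ℝ) := by
      apply Finset.sum_le_sum_of_subset_of_nonneg (Finset.subset_univ _)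
      intros; positivity
    have h2 : ∑ v ∈ Finset.univ, ((G.neighborSet v).ncard : ℝ)
        = 2 * (G.edgeFinset.card : ℝ) := by
      have h := G.sum_degrees_eq_twice_card_edges
      calc ∑ v, ((G.neighborSet v).ncard : ℝ) = ∑ v, (G.degree v : ℝ) :=
            Finset.sum_congr rfl fun v _ => by rw [hncd v]
        _ = ((∑ v, G.degree v : ℕ) : ℝ) := by push_cast; rfl
        _ = _ := by rw [h]; push_cast; ring
    have h3 : (G.edgeFinset.card : ℝ) ≤ d * n := by
      rw [hedgefin, hn]
      exact_mod_cast hedges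
    calc _ ≤ _ := h1
      _ = 2 * (G.edgeFinset.card : ℝ) := h2
      _ ≤ 2 * (d * n) := by linarith
  have hTcard : (T.card : ℝ) ≥ a * n / 2 := by
    have : c * ∑ v ∈ W' \ ∅, ((G.neighborSet v).ncard : ℝ) ≤ c * (2 * (d * n)) :=
      mul_le_mul_of_nonneg_left hsum hc0
    have hcval : c * (2 * (d * n)) = a * n / 2 := by
      rw [hc]; field_simp; ring
    have h𝓗 : (𝓗.card : ℝ) ≥ a * n := hcard
    linarith
  refine ⟨T, hTsub, hTcard, ?_, fun v hv => hgood v hv⟩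
  -- vertex count
  have hUle : unionGraph H T ≤ G := unionGraph_le (fun f hf => hcopies f (hTsub hf))
  have hsupfin : (unionGraph H T).support.Finite := Set.toFinite _
  have hEB : (unionGraph H T).edgeSet.ncard ≤ d * hsupfin.toFinset.card := by
    apply edge_bound G d hdeg _ _ hUle
    rw [Set.Finite.coe_toFinset]
  have hTE : T.card ≤ (unionGraph H T).edgeSet.ncard :=
    card_le_edges (fun f hf => hcopies f (hTsub hf))
      (fun f hf g hg => hdisj f (hTsub hf) g (hTsub hg)) hHedge
  have hsupcard : hsupfin.toFinset.card = (unionGraph H T).support.ncard := by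
    rw [Set.ncard_eq_toFinset_card]
  have hkey : (T.card : ℝ) ≤ d * ((unionGraph H T).support.ncard : ℝ) := by
    have : T.card ≤ d * (unionGraph H T).support.ncard := by
      calc T.card ≤ _ := hTE
        _ ≤ d * hsupfin.toFinset.card := hEB
        _ = _ := by rw [hsupcard]
    exact_mod_cast this
  have : ((unionGraph H T).support.ncard : ℝ) ≥ c * n := by
    rw [hc]
    rw [ge_iff_le, div_mul_eq_mul_div, div_le_iff₀ (by positivity)]
    have h4 : a * n / 2 ≤ (T.card : ℝ) := hTcard
    nlinarith
  exact this
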